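/- arXiv:1607.08492 — 4 statements merged into one kernel-verified Lean document; each statement's English description precedes it below -/
import Mathlib

section
/- Let 0 < a < 1, C' ≥ (a/2)^{1/(a−1)}, and let x, y, z > 0 satisfy z > C'(x + y). Then ∫_0^1 (x + p(y+z))^{a-1} dp ≤ (1/2)(x+y)^{a-1}. -/
set_option linter.unnecessarySimpa false

open MeasureTheory

theorem stmt6 (a C' x y z : ℝ) (ha : 0 < a) (ha1 : a < 1)
    (hC' : (a / 2) ^ (1 / (a - 1)) ≤ C')
    (hx : 0 < x) (hy : 0 < y) (hz : 0 < z) (hzC : C' * (x + y) < z) :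
    (∫ p in (0:ℝ)..1, (x + p * (y + z)) ^ (a - 1)) ≤ (1 / 2) * (x + y) ^ (a - 1) := by
  set S : ℝ := x + y + z with hS
  have ha1' : a - 1 < 0 := by linarith
  have ha2 : (0:ℝ) < a / 2 := by linarith
  have hK : (0:ℝ) < (a / 2) ^ (1 / (a - 1)) := Real.rpow_pos_of_pos ha2 _
  have hC'pos : (0:ℝ) < C' := lt_of_lt_of_le hK hC'
  have hxy : (0:ℝ) < x + y := by linarith
  have hSpos : (0:ℝ) < S := by positivity
  have hfint : IntervalIntegrable (fun p => (x + p * (y + z)) ^ (a - 1)) volume 0 1 := by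
    apply ContinuousOn.intervalIntegrable
    apply ContinuousOn.rpow_const (by fun_prop)
    intro p hp
    left
    have hp' : 0 ≤ p := by
      simp only [Set.uIcc_of_le (by norm_num : (0:ℝ) ≤ 1), Set.mem_Icc] at hp
      exact hp.1
    nlinarith
  have hgint : IntervalIntegrable (fun p => p ^ (a - 1) * S ^ (a - 1)) volume 0 1 :=
    (intervalIntegral.intervalIntegrable_rpow' (by linarith)).mul_const _
  have hmono : (∫ p in (0:ℝ)..1, (x + p * (y + z)) ^ (a - 1)) ≤
      ∫ p in (0:ℝ)..1, p ^ (a - 1) * S ^ (a - 1) := by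
    apply intervalIntegral.integral_mono_ae_restrict (by norm_num) hfint hgint
    have h0 : ∀ᵐ p : ℝ, p ≠ (0:ℝ) := by
      rw [MeasureTheory.ae_iff]
      simpa using measure_singleton (0:ℝ)
    filter_upwards [ae_restrict_mem measurableSet_Icc, ae_restrict_of_ae h0]
      with p hp hp0
    have hppos : 0 < p := lt_of_le_of_ne hp.1 (Ne.symm hp0)
    have hp1 : p ≤ 1 := hp.2
    have h1 : p * S ≤ x + p * (y + z) := by nlinarith
    have h2 : (x + p * (y + z)) ^ (a - 1) ≤ (p * S) ^ (a - 1) :=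
      Real.rpow_le_rpow_of_nonpos (by positivity) h1 ha1'.le
    calc (x + p * (y + z)) ^ (a - 1) ≤ (p * S) ^ (a - 1) := h2
      _ = p ^ (a - 1) * S ^ (a - 1) := Real.mul_rpow hppos.le hSpos.le
  have hval : (∫ p in (0:ℝ)..1, p ^ (a - 1) * S ^ (a - 1)) = (1 / a) * S ^ (a - 1) := by
    rw [intervalIntegral.integral_mul_const, integral_rpow (Or.inl (by linarith))]
    rw [Real.one_rpow, Real.zero_rpow (by linarith : a - 1 + 1 ≠ 0)]
    ring_nf
  have hSbound : S ^ (a - 1) ≤ (a / 2) * (x + y) ^ (a - 1) := by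
    have hKle : (a / 2) ^ (1 / (a - 1)) * (x + y) ≤ S := by nlinarith
    have := Real.rpow_le_rpow_of_nonpos (by positivity) hKle ha1'.le
    calc S ^ (a - 1) ≤ ((a / 2) ^ (1 / (a - 1)) * (x + y)) ^ (a - 1) := this
      _ = ((a / 2) ^ (1 / (a - 1))) ^ (a - 1) * (x + y) ^ (a - 1) :=
          Real.mul_rpow hK.le hxy.le
      _ = (a / 2) * (x + y) ^ (a - 1) := by
          rw [← Real.rpow_mul ha2.le, one_div_mul_cancel (by linarith : a - 1 ≠ 0),
            Real.rpow_one]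
  calc (∫ p in (0:ℝ)..1, (x + p * (y + z)) ^ (a - 1))
      ≤ ∫ p in (0:ℝ)..1, p ^ (a - 1) * S ^ (a - 1) := hmono
    _ = (1 / a) * S ^ (a - 1) := hval
    _ ≤ (1 / a) * ((a / 2) * (x + y) ^ (a - 1)) := by
        apply mul_le_mul_of_nonneg_left hSbound (by positivity)
    _ = (1 / 2) * (x + y) ^ (a - 1) := by field_simp
end

section
/- Let 0 < a < 1 and E_1, ..., E_n > 0 (n ≥ 2). If E_1 ≥ (1/2)·∑_{i=2}^n E_i, then √(E_1) · ∫_0^1 (p·E_1 + ∑_{i=2}^n E_i)^{a-1} dp ≤ (2/a)·(∑_{i=1}^n E_i)^{a - 1/2}. -/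
theorem stmt8 (a : ℝ) (ha : 0 < a) (ha1 : a < 1) (n : ℕ) (hn : 2 ≤ n)
    (E : ℕ → ℝ) (hpos : ∀ i, 1 ≤ i → i ≤ n → 0 < E i)
    (h1 : (1 / 2) * ∑ i ∈ Finset.Icc 2 n, E i ≤ E 1) :
    Real.sqrt (E 1) *
        ∫ p in (0:ℝ)..1, (p * E 1 + ∑ i ∈ Finset.Icc 2 n, E i) ^ (a - 1)
      ≤ (2 / a) * (∑ i ∈ Finset.Icc 1 n, E i) ^ (a - 1 / 2) := by
  set S := ∑ i ∈ Finset.Icc 2 n, E i with hS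
  have hE1 : 0 < E 1 := hpos 1 le_rfl (by omega)
  have hSpos : 0 < S := by
    apply Finset.sum_pos
    · intro i hi
      simp only [Finset.mem_Icc] at hi
      exact hpos i (by omega) hi.2
    · exact ⟨2, by simp [Finset.mem_Icc]; omega⟩
  have hsum : ∑ i ∈ Finset.Icc 1 n, E i = E 1 + S := by
    rw [show Finset.Icc 1 n = insert 1 (Finset.Icc 2 n) from by
      ext x; simp [Finset.mem_Icc]; omega,
      Finset.sum_insert (by simp [Finset.mem_Icc])]
  have hT : 0 < E 1 + S := by linarith
  have hint : (∫ p in (0:ℝ)..1, (p * E 1 + S) ^ (a - 1))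
      = (E 1)⁻¹ * (((E 1 + S) ^ a - S ^ a) / a) := by
    have h1' : ∀ p : ℝ, (p * E 1 + S) ^ (a - 1) = (fun u : ℝ => u ^ (a - 1)) (E 1 * p + S) := by
      intro p; simp [mul_comm]
    simp_rw [h1']
    rw [intervalIntegral.integral_comp_mul_add (fun u : ℝ => u ^ (a - 1)) (ne_of_gt hE1) S]
    rw [mul_zero, zero_add, mul_one, smul_eq_mul]
    rw [integral_rpow (Or.inl (by linarith))]
    rw [show a - 1 + 1 = a from by ring]
  rw [hint, hsum]
  have hsE : (0:ℝ) < Real.sqrt (E 1) := Real.sqrt_pos.2 hE1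
  have hsT : (0:ℝ) < Real.sqrt (E 1 + S) := Real.sqrt_pos.2 hT
  have hTa : (0:ℝ) < (E 1 + S) ^ a := Real.rpow_pos_of_pos hT a
  have hSa : (0:ℝ) ≤ S ^ a := Real.rpow_nonneg hSpos.le a
  have hmulE : Real.sqrt (E 1) * Real.sqrt (E 1) = E 1 := Real.mul_self_sqrt hE1.le
  have hmulT : Real.sqrt (E 1 + S) * Real.sqrt (E 1 + S) = E 1 + S :=
    Real.mul_self_sqrt hT.le
  have hpow : (E 1 + S) ^ (a - 1/2) = (E 1 + S) ^ a / Real.sqrt (E 1 + S) := by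
    rw [Real.rpow_sub hT, ← Real.sqrt_eq_rpow]
  have hsqT : Real.sqrt (E 1 + S) ≤ 2 * Real.sqrt (E 1) := by
    have h4 : E 1 + S ≤ 4 * E 1 := by linarith
    calc Real.sqrt (E 1 + S) ≤ Real.sqrt (4 * E 1) := Real.sqrt_le_sqrt h4
      _ = 2 * Real.sqrt (E 1) := by
          rw [show (4:ℝ) = 2 ^ 2 from by norm_num, Real.sqrt_mul (by positivity),
            Real.sqrt_sq (by norm_num)]
  rw [hpow]
  have h2 : Real.sqrt (E 1) * (E 1)⁻¹ = (Real.sqrt (E 1))⁻¹ := by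
    rw [← hmulE]; field_simp; rw [Real.sqrt_sq hsE.le]
  calc Real.sqrt (E 1) * ((E 1)⁻¹ * (((E 1 + S) ^ a - S ^ a) / a))
      ≤ Real.sqrt (E 1) * ((E 1)⁻¹ * ((E 1 + S) ^ a / a)) := by
        gcongr
        linarith
    _ = (Real.sqrt (E 1))⁻¹ * ((E 1 + S) ^ a / a) := by
        rw [← mul_assoc, h2]
    _ ≤ 2 / a * ((E 1 + S) ^ a / Real.sqrt (E 1 + S)) := by
        rw [inv_mul_eq_div, div_div, div_mul_div_comm,
          div_le_div_iff₀ (by positivity) (by positivity)]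
        nlinarith [mul_le_mul_of_nonneg_left hsqT (mul_pos hTa ha).le]
end

section
/- Let Ψ_n be a Markov chain on a measurable space (X, B) and let X = G ∪ B be a measurable partition. Let T_0 = 0 and T_{n+1} = inf{k > T_n : Ψ_k ∈ G} be the successive visit times to G, and set Ψ̂_n = Ψ_{T_n}. Suppose C ⊆ G, and: (i) there are constants α > 0 and ξ_1 ≥ 1 and a function ξ: X → [1,∞) with ξ ≤ ξ_1 on G, such that P[T_{n+1} − T_n > k | Ψ_{T_n}] ≤ ξ(Ψ_{T_n})·k^{−α} for all k ≥ 1; (ii) there are ω > 0 and a function η: X → (0,∞) such that P_x[τ̂_C > k] ≤ η(x)·e^{−ωk}, where τ̂_C = inf{n > 0 : Ψ̂_n ∈ C}. Then for every ε > 0 there is a constant c such that P_x[τ_C > n] ≤ c·(η(x) + ξ(x))·n^{−(α−ε)} for all x ∈ X and n ≥ 1, where τ_C = inf{n > 0 : Ψ_n ∈ C}. -/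
open MeasureTheory

set_option maxHeartbeats 1600000 in
/-- The induced-chain method (Theorem 3.6 of the paper).  The Markov chain is modelled
canonically on path space: for each starting point `x`, `P x` is the law of the chain
started at `x`, the Markov property being expressed through conditional expectations of
shifted paths.  `T n` are the successive visit times to the "good set" `G`, `τC` and
`τhatC` are the first passage times to `C ⊆ G` of the original and the induced chain. -/
theorem stmt14 {S : Type*} [MeasurableSpace S]
    (P : S → Measure (ℕ → S)) (hP : ∀ x, IsProbabilityMeasure (P x))
    (hstart : ∀ x, P x {ω | ω 0 = x} = 1)
    -- time-homogeneous Markov property: conditionally on the position at time `n`,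
    -- the law of the shifted path is that of the chain restarted there
    (hMarkov : ∀ x : S, ∀ n : ℕ, ∀ B : Set (ℕ → S), MeasurableSet B →
      ∀ᵐ ω ∂(P x),
        (MeasureTheory.condExp (MeasurableSpace.comap (fun ω' : ℕ → S => ω' n) inferInstance)
            (P x) (fun ω' => Set.indicator B (fun _ => (1:ℝ)) (fun k => ω' (n + k)))) ω
          = ((P (ω n)) B).toReal)
    (G C : Set S) (hG : MeasurableSet G) (hC : MeasurableSet C) (hCG : C ⊆ G)
    -- successive visit times to `G`
    (T : ℕ → (ℕ → S) → ℕ)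
    (hT0 : ∀ ω, T 0 ω = 0)
    (hTsucc : ∀ n ω, T (n + 1) ω = sInf {k | T n ω < k ∧ ω k ∈ G})
    (hTfin : ∀ x n, ∀ᵐ ω ∂(P x), {k | T n ω < k ∧ ω k ∈ G}.Nonempty)
    -- first passage times of the original and the induced chain
    (τC τhatC : (ℕ → S) → ℕ)
    (hτC : ∀ ω, τC ω = sInf {n | 0 < n ∧ ω n ∈ C})
    (hτhatC : ∀ ω, τhatC ω = sInf {n | 0 < n ∧ ω (T n ω) ∈ C})
    (α : ℝ) (hα : 0 < α) (ξ : S → ℝ) (hξ1 : ∀ y, 1 ≤ ξ y)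
    (ξ1 : ℝ) (hξ1' : 1 ≤ ξ1) (hξG : ∀ y ∈ G, ξ y ≤ ξ1)
    -- hypothesis (i): conditionally on `Ψ_{T_n}`, the waiting time `T_{n+1} - T_n`
    -- has a polynomial tail
    (hi : ∀ x : S, ∀ n k : ℕ, 1 ≤ k →
      ∀ᵐ ω ∂(P x),
        (MeasureTheory.condExp
            (MeasurableSpace.comap (fun ω' : ℕ → S => ω' (T n ω')) inferInstance) (P x)
            (fun ω' => Set.indicator {ω'' | k < T (n + 1) ω'' - T n ω''}
              (fun _ => (1:ℝ)) ω')) ω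
          ≤ ξ (ω (T n ω)) * (k : ℝ) ^ (-α))
    (ω0 : ℝ) (hω0 : 0 < ω0) (η : S → ℝ) (hη : ∀ x, 0 < η x)
    -- hypothesis (ii): the first passage time of the induced chain has an exponential tail
    (hii : ∀ x : S, ∀ k : ℕ,
      P x {ω | k < τhatC ω} ≤ ENNReal.ofReal (η x * Real.exp (-ω0 * k))) :
    ∀ ε : ℝ, 0 < ε → ∃ c : ℝ, 0 < c ∧
      ∀ x : S, ∀ n : ℕ, 1 ≤ n →
        P x {ω | n < τC ω} ≤ ENNReal.ofReal (c * (η x + ξ x) * (n : ℝ) ^ (-(α - ε))) := by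
  have measT : ∀ n, Measurable (T n) := by
    intro n
    induction n with
    | zero =>
      have h : T 0 = fun _ => 0 := funext hT0
      rw [h]; exact measurable_const
    | succ n ih =>
      have hA : ∀ j : ℕ, MeasurableSet {ω : ℕ → S | T n ω < j ∧ ω j ∈ G} := by
        intro j
        have h1 : MeasurableSet (T n ⁻¹' {i | i < j}) := ih ((Set.to_countable _).measurableSet)
        have h2 : MeasurableSet ((fun ω : ℕ → S => ω j) ⁻¹' G) := (measurable_pi_apply j) hG
        exact h1.inter h2
      apply measurable_to_countable'
      intro k
      rcases k with _ | k
      · have h : T (n+1) ⁻¹' {0} = ⋂ j, {ω : ℕ → S | T n ω < j ∧ ω j ∈ G}ᶜ := by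
          ext ω
          simp only [Set.mem_preimage, Set.mem_singleton_iff, Set.mem_iInter,
            Set.mem_compl_iff, hTsucc n ω, Set.mem_setOf_eq]
          constructor
          · intro h j hj
            rcases Nat.sInf_eq_zero.mp h with h' | h'
            · exact absurd h'.1 (Nat.not_lt_zero _)
            · have hj' : j ∈ ({k | T n ω < k ∧ ω k ∈ G} : Set ℕ) := hj
              rw [h'] at hj'
              exact hj'
          · intro h
            have he : {k | T n ω < k ∧ ω k ∈ G} = (∅ : Set ℕ) :=
              Set.eq_empty_iff_forall_notMem.2 h
            rw [he]; exact Nat.sInf_empty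
        rw [h]
        exact MeasurableSet.iInter fun j => (hA j).compl
      · have h : T (n+1) ⁻¹' {k+1} =
            {ω : ℕ → S | T n ω < k+1 ∧ ω (k+1) ∈ G} ∩
              ⋂ (j : ℕ), ⋂ (_ : j ≤ k), {ω : ℕ → S | T n ω < j ∧ ω j ∈ G}ᶜ := by
          ext ω
          simp only [Set.mem_preimage, Set.mem_singleton_iff, Set.mem_inter_iff,
            Set.mem_iInter, Set.mem_compl_iff, hTsucc n ω, Set.mem_setOf_eq]
          constructor
          · intro h
            have hne : ({k' | T n ω < k' ∧ ω k' ∈ G} : Set ℕ).Nonempty := by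
              by_contra hc
              rw [Set.not_nonempty_iff_eq_empty] at hc
              rw [hc, Nat.sInf_empty] at h
              exact Nat.succ_ne_zero k h.symm
            have hmem := Nat.sInf_mem hne
            rw [h] at hmem
            refine ⟨hmem, fun j hj hjmem => ?_⟩
            exact Nat.notMem_of_lt_sInf (s := {k' | T n ω < k' ∧ ω k' ∈ G}) (by omega) hjmem
          · rintro ⟨hmem, hbelow⟩
            have hne : ({k' | T n ω < k' ∧ ω k' ∈ G} : Set ℕ).Nonempty := ⟨k+1, hmem⟩
            have h1 : sInf {k' | T n ω < k' ∧ ω k' ∈ G} ≤ k + 1 := Nat.sInf_le hmem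
            have h2 := Nat.sInf_mem hne
            rcases Nat.lt_or_ge (sInf {k' | T n ω < k' ∧ ω k' ∈ G}) (k+1) with hlt | hge
            · exact absurd h2 (hbelow _ (by omega))
            · omega
        rw [h]
        exact (hA (k+1)).inter
          (MeasurableSet.iInter fun j => MeasurableSet.iInter fun _ => (hA j).compl)
  have measPsiT : ∀ n, Measurable (fun ω : ℕ → S => ω (T n ω)) := by
    intro n E hE
    have h : (fun ω : ℕ → S => ω (T n ω)) ⁻¹' E =
        ⋃ k, (T n ⁻¹' {k} ∩ (fun ω : ℕ → S => ω k) ⁻¹' E) := by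
      ext ω
      simp only [Set.mem_preimage, Set.mem_iUnion, Set.mem_inter_iff, Set.mem_singleton_iff]
      exact ⟨fun h => ⟨T n ω, rfl, h⟩, fun ⟨k, hk, h⟩ => hk ▸ h⟩
    rw [h]
    exact MeasurableSet.iUnion fun k =>
      ((measT n) (measurableSet_singleton k)).inter ((measurable_pi_apply k) hE)
  have Tlt : ∀ (ω : ℕ → S), (∀ i, {k | T i ω < k ∧ ω k ∈ G}.Nonempty) →
      ∀ i, T i ω < T (i+1) ω := by
    intro ω hne i
    rw [hTsucc i ω]
    exact (Nat.sInf_mem (hne i)).1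
  have hitG : ∀ (ω : ℕ → S), (∀ i, {k | T i ω < k ∧ ω k ∈ G}.Nonempty) →
      ∀ i, ω (T (i+1) ω) ∈ G := by
    intro ω hne i
    rw [hTsucc i ω]
    exact (Nat.sInf_mem (hne i)).2
  have Tmono : ∀ (ω : ℕ → S), (∀ i, {k | T i ω < k ∧ ω k ∈ G}.Nonempty) →
      Monotone (fun i => T i ω) :=
    fun ω hne => monotone_nat_of_le_succ (fun i => (Tlt ω hne i).le)
  have Tge : ∀ (ω : ℕ → S), (∀ i, {k | T i ω < k ∧ ω k ∈ G}.Nonempty) →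
      ∀ i, i ≤ T i ω :=
    fun ω hne i => (strictMono_nat_of_lt_succ (Tlt ω hne)).le_apply
  have enum : ∀ (ω : ℕ → S), (∀ i, {k | T i ω < k ∧ ω k ∈ G}.Nonempty) →
      ∀ q, 0 < q → ω q ∈ G → ∃ j, 0 < j ∧ T j ω = q := by
    intro ω hne q hq hqG
    have hset : ({j | q ≤ T j ω} : Set ℕ).Nonempty := ⟨q, Tge ω hne q⟩
    have hmem : q ≤ T (sInf {j | q ≤ T j ω}) ω := Nat.sInf_mem hset
    have hj0pos : 0 < sInf {j | q ≤ T j ω} := by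
      rcases Nat.eq_zero_or_pos (sInf {j | q ≤ T j ω}) with h | h
      · exfalso; rw [h, hT0] at hmem; omega
      · exact h
    obtain ⟨j1, hj1⟩ : ∃ j1, sInf {j | q ≤ T j ω} = j1 + 1 :=
      ⟨sInf {j | q ≤ T j ω} - 1, by omega⟩
    have hnotmem : j1 ∉ {j | q ≤ T j ω} := Nat.notMem_of_lt_sInf (by omega)
    have hTj1 : T j1 ω < q := by
      simp only [Set.mem_setOf_eq, not_le] at hnotmem; exact hnotmem
    have hle : T (j1+1) ω ≤ q := by
      rw [hTsucc j1 ω]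
      exact Nat.sInf_le ⟨hTj1, hqG⟩
    rw [hj1] at hmem
    exact ⟨j1+1, Nat.succ_pos _, le_antisymm hle hmem⟩
  have ae_of_start : ∀ (x : S) (W : Set (ℕ → S)), MeasurableSet W →
      (∀ᵐ ω ∂(P x), ω ∈ {ω' : ℕ → S | ω' 0 = x} → ω ∈ W) → ∀ᵐ ω ∂(P x), ω ∈ W := by
    intro x W hWm hsub
    haveI := hP x
    have hnull : P x {ω | ¬ (ω ∈ {ω' : ℕ → S | ω' 0 = x} → ω ∈ W)} = 0 := by
      rw [← ae_iff]; exact hsub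
    have hWone : P x W = 1 := by
      have hsub2 : {ω' : ℕ → S | ω' 0 = x} ⊆
          W ∪ {ω | ¬ (ω ∈ {ω' : ℕ → S | ω' 0 = x} → ω ∈ W)} := by
        intro ω hω
        by_cases h : ω ∈ W
        · exact Or.inl h
        · exact Or.inr (fun hc => h (hc hω))
      refine le_antisymm prob_le_one ?_
      calc (1:ENNReal) = P x {ω' : ℕ → S | ω' 0 = x} := (hstart x).symm
        _ ≤ P x (W ∪ {ω | ¬ (ω ∈ {ω' : ℕ → S | ω' 0 = x} → ω ∈ W)}) := measure_mono hsub2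
        _ ≤ P x W + P x {ω | ¬ (ω ∈ {ω' : ℕ → S | ω' 0 = x} → ω ∈ W)} := measure_union_le _ _
        _ = P x W := by rw [hnull, add_zero]
    have hcompl : P x Wᶜ = 0 := by
      have h := measure_compl hWm (measure_ne_top (P x) W)
      rw [hWone, measure_univ] at h
      simpa using h
    exact (MeasureTheory.mem_ae_iff).2 (by simpa using hcompl)
  have inc_tail : ∀ (x : S) (j k : ℕ), 1 ≤ k →
      P x {ω | k < T (j+1) ω - T j ω} ≤
        ENNReal.ofReal ((if j = 0 then ξ x else ξ1) * (k:ℝ) ^ (-α)) := by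
    intro x j k hk
    haveI := hP x
    have hD : MeasurableSet {ω : ℕ → S | k < T (j+1) ω - T j ω} := by
      have hmsub : Measurable fun ω : ℕ → S => T (j+1) ω - T j ω :=
        (measT (j+1)).sub (measT j)
      exact hmsub ((Set.to_countable _).measurableSet)
    have hm' : MeasurableSpace.comap (fun ω' : ℕ → S => ω' (T j ω')) inferInstance ≤
        MeasurableSpace.pi := (measPsiT j).comap_le
    have hfInt : Integrable
        (fun ω' : ℕ → S => Set.indicator {ω'' : ℕ → S | k < T (j+1) ω'' - T j ω''}
          (fun _ => (1:ℝ)) ω') (P x) := (integrable_const (1:ℝ)).indicator hD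
    have h1 := integral_condExp (μ := P x)
      (f := fun ω' : ℕ → S => Set.indicator {ω'' : ℕ → S | k < T (j+1) ω'' - T j ω''}
        (fun _ => (1:ℝ)) ω') hm'
    have h2 : ∫ ω', Set.indicator {ω'' : ℕ → S | k < T (j+1) ω'' - T j ω''}
        (fun _ => (1:ℝ)) ω' ∂(P x) = ((P x) {ω : ℕ → S | k < T (j+1) ω - T j ω}).toReal := by
      have := integral_indicator_one (μ := P x) hD; rw [measureReal_def] at this; exact this
    have hr0 : 0 ≤ (if j = 0 then ξ x else ξ1) * (k:ℝ) ^ (-α) := by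
      apply mul_nonneg
      · split
        · linarith [hξ1 x]
        · linarith
      · exact Real.rpow_nonneg (Nat.cast_nonneg k) _
    have h3 : ∀ᵐ ω ∂(P x),
        (MeasureTheory.condExp
          (MeasurableSpace.comap (fun ω' : ℕ → S => ω' (T j ω')) inferInstance) (P x)
          (fun ω' => Set.indicator {ω'' : ℕ → S | k < T (j+1) ω'' - T j ω''}
            (fun _ => (1:ℝ)) ω')) ω ≤ (if j = 0 then ξ x else ξ1) * (k:ℝ) ^ (-α) := by
      rcases Nat.eq_zero_or_pos j with hj | hj
      · subst hj
        rw [if_pos rfl]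
        have hWm : MeasurableSet {ω : ℕ → S |
            (MeasureTheory.condExp
              (MeasurableSpace.comap (fun ω' : ℕ → S => ω' (T 0 ω')) inferInstance) (P x)
              (fun ω' => Set.indicator {ω'' : ℕ → S | k < T (0+1) ω'' - T 0 ω''}
                (fun _ => (1:ℝ)) ω')) ω ≤ ξ x * (k:ℝ) ^ (-α)} :=
          measurableSet_le (stronglyMeasurable_condExp.mono hm').measurable measurable_const
        have hsub : ∀ᵐ ω ∂(P x), ω ∈ {ω' : ℕ → S | ω' 0 = x} →
            ω ∈ {ω : ℕ → S |
              (MeasureTheory.condExp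
                (MeasurableSpace.comap (fun ω' : ℕ → S => ω' (T 0 ω')) inferInstance) (P x)
                (fun ω' => Set.indicator {ω'' : ℕ → S | k < T (0+1) ω'' - T 0 ω''}
                  (fun _ => (1:ℝ)) ω')) ω ≤ ξ x * (k:ℝ) ^ (-α)} := by
          filter_upwards [hi x 0 k hk] with ω hω hx0
          have hx0' : ω 0 = x := hx0
          rw [hT0 ω, hx0'] at hω
          exact hω
        exact ae_of_start x _ hWm hsub
      · obtain ⟨i, rfl⟩ : ∃ i, j = i + 1 := ⟨j - 1, by omega⟩
        have hGae : ∀ᵐ ω ∂(P x), ω (T (i+1) ω) ∈ G := by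
          filter_upwards [ae_all_iff.2 (hTfin x)] with ω hω
          exact hitG ω hω i
        filter_upwards [hi x (i+1) k hk, hGae] with ω h1 h2
        have hξle : ξ (ω (T (i+1) ω)) ≤ ξ1 := hξG _ h2
        have hkα : (0:ℝ) ≤ (k:ℝ) ^ (-α) := Real.rpow_nonneg (Nat.cast_nonneg k) _
        rw [if_neg (Nat.succ_ne_zero i)]
        exact le_trans h1 (mul_le_mul_of_nonneg_right hξle hkα)
    have h4a := integral_mono_ae (μ := P x) integrable_condExp
      (integrable_const ((if j = 0 then ξ x else ξ1) * (k:ℝ) ^ (-α))) h3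
    have h4b : ∫ _ω : ℕ → S, ((if j = 0 then ξ x else ξ1) * (k:ℝ) ^ (-α)) ∂(P x)
        = (if j = 0 then ξ x else ξ1) * (k:ℝ) ^ (-α) := by simp
    rw [ENNReal.le_ofReal_iff_toReal_le (measure_ne_top _ _) hr0]
    calc ((P x) {ω : ℕ → S | k < T (j+1) ω - T j ω}).toReal
        = ∫ ω', Set.indicator {ω'' : ℕ → S | k < T (j+1) ω'' - T j ω''}
            (fun _ => (1:ℝ)) ω' ∂(P x) := h2.symm
      _ = ∫ ω, (MeasureTheory.condExp
            (MeasurableSpace.comap (fun ω' : ℕ → S => ω' (T j ω')) inferInstance) (P x)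
            (fun ω' => Set.indicator {ω'' : ℕ → S | k < T (j+1) ω'' - T j ω''}
              (fun _ => (1:ℝ)) ω')) ω ∂(P x) := h1.symm
      _ ≤ (if j = 0 then ξ x else ξ1) * (k:ℝ) ^ (-α) := le_trans h4a (le_of_eq h4b)
  have Tm_tail : ∀ (x : S) (m n : ℕ), 1 ≤ m → m ≤ n →
      P x {ω | n < T m ω} ≤
        ENNReal.ofReal ((ξ x + m * ξ1) * (((n / m : ℕ):ℝ)) ^ (-α)) := by
    intro x m n hm hmn
    have hk1 : 1 ≤ n / m := (Nat.one_le_div_iff hm).2 hmn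
    have hsub : {ω : ℕ → S | n < T m ω} ⊆
        ⋃ j ∈ Finset.range m, {ω : ℕ → S | n / m < T (j+1) ω - T j ω} := by
      intro ω hω
      have hω' : n < T m ω := hω
      by_contra hc
      simp only [Set.mem_iUnion, Finset.mem_range, Set.mem_setOf_eq, not_exists, not_and,
        not_lt] at hc
      have hind : ∀ j, j ≤ m → T j ω ≤ j * (n / m) := by
        intro j
        induction j with
        | zero => intro _; rw [hT0]; exact Nat.zero_le _
        | succ i ih =>
          intro hj
          have h1 : T (i+1) ω - T i ω ≤ n / m := hc i (by omega)
          have h2 : T i ω ≤ i * (n / m) := ih (by omega)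
          have h3 : T (i+1) ω ≤ T i ω + n / m := by omega
          calc T (i+1) ω ≤ i * (n / m) + n / m := by omega
            _ = (i+1) * (n / m) := by ring
      have h1 : T m ω ≤ m * (n / m) := hind m le_rfl
      have h2 : m * (n / m) ≤ n := by rw [mul_comm]; exact Nat.div_mul_le_self n m
      omega
    have hsum : ∑ j ∈ Finset.range m, P x {ω : ℕ → S | n / m < T (j+1) ω - T j ω} ≤
        ENNReal.ofReal ((ξ x + m * ξ1) * (((n / m : ℕ):ℝ)) ^ (-α)) := by
      have hbound : ∀ j ∈ Finset.range m,
          P x {ω : ℕ → S | n / m < T (j+1) ω - T j ω} ≤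
            ENNReal.ofReal ((if j = 0 then ξ x else ξ1) * (((n / m : ℕ):ℝ)) ^ (-α)) :=
        fun j _ => inc_tail x j (n / m) hk1
      refine le_trans (Finset.sum_le_sum hbound) ?_
      rw [← ENNReal.ofReal_sum_of_nonneg]
      · apply ENNReal.ofReal_le_ofReal
        have hkα : (0:ℝ) ≤ (((n / m : ℕ):ℝ)) ^ (-α) :=
          Real.rpow_nonneg (Nat.cast_nonneg _) _
        rw [← Finset.sum_mul]
        apply mul_le_mul_of_nonneg_right _ hkα
        obtain ⟨m', rfl⟩ : ∃ m', m = m' + 1 := ⟨m - 1, by omega⟩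
        rw [Finset.sum_range_succ']
        have hsum' : ∑ i ∈ Finset.range m', (if i + 1 = 0 then ξ x else ξ1) =
            (m' : ℝ) * ξ1 := by
          rw [Finset.sum_congr rfl (fun i _ => if_neg (Nat.succ_ne_zero i))]
          simp [Finset.sum_const, nsmul_eq_mul]
        rw [hsum', if_pos rfl]
        push_cast
        nlinarith [hξ1']
      · intro j _
        apply mul_nonneg
        · split
          · linarith [hξ1 x]
          · linarith
        · exact Real.rpow_nonneg (Nat.cast_nonneg _) _
    calc P x {ω : ℕ → S | n < T m ω}
        ≤ P x (⋃ j ∈ Finset.range m, {ω : ℕ → S | n / m < T (j+1) ω - T j ω}) :=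
          measure_mono hsub
      _ ≤ ∑ j ∈ Finset.range m, P x {ω : ℕ → S | n / m < T (j+1) ω - T j ω} :=
          measure_biUnion_finset_le _ _
      _ ≤ _ := hsum
  have key : ∀ (x : S) (m n : ℕ), 1 ≤ m → m ≤ n →
      P x {ω | n < τC ω} ≤
        ENNReal.ofReal (η x * Real.exp (-ω0 * m)) +
          ENNReal.ofReal ((ξ x + m * ξ1) * (((n / m : ℕ):ℝ)) ^ (-α)) := by
    intro x m n hm hmn
    have hpt : ∀ ω : ℕ → S, (∀ i, {k | T i ω < k ∧ ω k ∈ G}.Nonempty) →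
        n < τC ω → m < τhatC ω ∨ n < T m ω := by
      intro ω hne hτ
      by_contra hcon
      push_neg at hcon
      obtain ⟨h1, h2⟩ := hcon
      have hScne : ({q | 0 < q ∧ ω q ∈ C} : Set ℕ).Nonempty := by
        by_contra hemp
        rw [Set.not_nonempty_iff_eq_empty] at hemp
        rw [hτC ω, hemp, Nat.sInf_empty] at hτ
        omega
      obtain ⟨q, hq1, hq2⟩ := hScne
      obtain ⟨j, hjpos, hjq⟩ := enum ω hne q hq1 (hCG hq2)
      have hhatne : ({i | 0 < i ∧ ω (T i ω) ∈ C} : Set ℕ).Nonempty :=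
        ⟨j, hjpos, by rw [hjq]; exact hq2⟩
      have hp := Nat.sInf_mem hhatne
      rw [← hτhatC ω] at hp
      have hTle : T (τhatC ω) ω ≤ T m ω := Tmono ω hne h1
      have hTpos : 0 < T (τhatC ω) ω := lt_of_lt_of_le hp.1 (Tge ω hne _)
      have hτle : τC ω ≤ T (τhatC ω) ω := by
        rw [hτC ω]
        exact Nat.sInf_le ⟨hTpos, hp.2⟩
      omega
    have hnullset : P x {ω : ℕ → S | ¬ ∀ i, ({k | T i ω < k ∧ ω k ∈ G} : Set ℕ).Nonempty}
        = 0 := by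
      rw [← ae_iff]
      exact ae_all_iff.2 (hTfin x)
    have hsub : {ω : ℕ → S | n < τC ω} ⊆
        ({ω : ℕ → S | m < τhatC ω} ∪ {ω : ℕ → S | n < T m ω}) ∪
          {ω : ℕ → S | ¬ ∀ i, ({k | T i ω < k ∧ ω k ∈ G} : Set ℕ).Nonempty} := by
      intro ω hω
      by_cases hne : ∀ i, ({k | T i ω < k ∧ ω k ∈ G} : Set ℕ).Nonempty
      · rcases hpt ω hne hω with h | h
        · exact Or.inl (Or.inl h)
        · exact Or.inl (Or.inr h)
      · exact Or.inr hne
    calc P x {ω : ℕ → S | n < τC ω}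
        ≤ P x (({ω : ℕ → S | m < τhatC ω} ∪ {ω : ℕ → S | n < T m ω}) ∪
            {ω : ℕ → S | ¬ ∀ i, ({k | T i ω < k ∧ ω k ∈ G} : Set ℕ).Nonempty}) :=
          measure_mono hsub
      _ ≤ P x ({ω : ℕ → S | m < τhatC ω} ∪ {ω : ℕ → S | n < T m ω}) +
            P x {ω : ℕ → S | ¬ ∀ i, ({k | T i ω < k ∧ ω k ∈ G} : Set ℕ).Nonempty} :=
          measure_union_le _ _
      _ = P x ({ω : ℕ → S | m < τhatC ω} ∪ {ω : ℕ → S | n < T m ω}) := by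
          rw [hnullset, add_zero]
      _ ≤ P x {ω : ℕ → S | m < τhatC ω} + P x {ω : ℕ → S | n < T m ω} :=
          measure_union_le _ _
      _ ≤ ENNReal.ofReal (η x * Real.exp (-ω0 * m)) +
            ENNReal.ofReal ((ξ x + m * ξ1) * (((n / m : ℕ):ℝ)) ^ (-α)) :=
          add_le_add (hii x m) (Tm_tail x m n hm hmn)
  have main : ∀ ε : ℝ, 0 < ε → ε < α → ∃ c : ℝ, 0 < c ∧
      ∀ x : S, ∀ n : ℕ, 1 ≤ n →
        P x {ω | n < τC ω} ≤ ENNReal.ofReal (c * (η x + ξ x) * (n : ℝ) ^ (-(α - ε))) := by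
    intro ε hε hεα
    obtain ⟨δ, hδdef⟩ : ∃ δ : ℝ, δ = ε / (1 + α) := ⟨_, rfl⟩
    have hδpos : 0 < δ := by rw [hδdef]; exact div_pos hε (by linarith)
    have hδlt : δ < 1 := by
      rw [hδdef, div_lt_one (by linarith)]; linarith
    have hδε : δ * (1 + α) = ε := by
      rw [hδdef]; field_simp
    obtain ⟨K, hKdef⟩ : ∃ K : ℝ, K = α / ω0 / δ + 2 := ⟨_, rfl⟩
    have hK2 : 2 ≤ K := by
      have : 0 < α / ω0 / δ := by positivity
      rw [hKdef]; linarith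
    have hKpos : 0 < K := by linarith
    -- the cut length
    have hMge : ∀ n : ℕ, (α / ω0) * Real.log n ≤ ((⌈(α / ω0) * Real.log n⌉₊ + 1 : ℕ) : ℝ) := by
      intro n
      push_cast
      have := Nat.le_ceil ((α / ω0) * Real.log n)
      linarith
    have hMle : ∀ n : ℕ, 1 ≤ n → ((⌈(α / ω0) * Real.log n⌉₊ + 1 : ℕ) : ℝ) ≤ K * (n:ℝ) ^ δ := by
      intro n hn
      have hn1 : (1:ℝ) ≤ (n:ℝ) := by exact_mod_cast hn
      have hlog0 : 0 ≤ Real.log n := Real.log_nonneg hn1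
      have hy0 : 0 ≤ (α / ω0) * Real.log n := mul_nonneg (by positivity) hlog0
      have h1 : ((⌈(α / ω0) * Real.log n⌉₊ + 1 : ℕ) : ℝ) ≤ (α / ω0) * Real.log n + 2 := by
        push_cast
        have := (Nat.ceil_lt_add_one hy0).le
        linarith
      have h2 : Real.log n ≤ (n:ℝ) ^ δ / δ := Real.log_le_rpow_div (by positivity) hδpos
      have h3 : (1:ℝ) ≤ (n:ℝ) ^ δ := by
        calc (1:ℝ) = (1:ℝ) ^ δ := by rw [Real.one_rpow]
          _ ≤ (n:ℝ) ^ δ := Real.rpow_le_rpow zero_le_one hn1 hδpos.le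
      have h4 : (α / ω0) * Real.log n ≤ (α / ω0) * ((n:ℝ) ^ δ / δ) :=
        mul_le_mul_of_nonneg_left h2 (by positivity)
      have h5 : (α / ω0) * ((n:ℝ) ^ δ / δ) = (α / ω0 / δ) * (n:ℝ) ^ δ := by ring
      nlinarith
    obtain ⟨N0, hN0⟩ : ∃ N0 : ℕ, ∀ n : ℕ, N0 ≤ n → K ≤ (n:ℝ) ^ (1 - δ) := by
      have ht := ((tendsto_rpow_atTop (by linarith : (0:ℝ) < 1 - δ)).comp
        tendsto_natCast_atTop_atTop (α := ℕ)).eventually_ge_atTop K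
      rw [Filter.eventually_atTop] at ht
      obtain ⟨N0, hN0⟩ := ht
      exact ⟨N0, fun n hn => hN0 n hn⟩
    obtain ⟨N, hNdef⟩ : ∃ N : ℕ, N = max N0 1 := ⟨_, rfl⟩
    have hN1 : 1 ≤ N := by rw [hNdef]; exact le_max_right _ _
    have hMlen : ∀ n : ℕ, N ≤ n → (⌈(α / ω0) * Real.log n⌉₊ + 1 : ℕ) ≤ n := by
      intro n hn
      have hn1 : 1 ≤ n := le_trans hN1 hn
      have hnN0 : N0 ≤ n := le_trans (by rw [hNdef]; exact le_max_left _ _) hn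
      have hn1R : (1:ℝ) ≤ (n:ℝ) := by exact_mod_cast hn1
      have hnpos : (0:ℝ) < (n:ℝ) := by linarith
      have hcast : ((⌈(α / ω0) * Real.log n⌉₊ + 1 : ℕ) : ℝ) ≤ (n:ℝ) := by
        calc ((⌈(α / ω0) * Real.log n⌉₊ + 1 : ℕ) : ℝ) ≤ K * (n:ℝ) ^ δ := hMle n hn1
          _ ≤ (n:ℝ) ^ (1 - δ) * (n:ℝ) ^ δ :=
            mul_le_mul_of_nonneg_right (hN0 n hnN0) (Real.rpow_nonneg hnpos.le δ)
          _ = (n:ℝ) ^ ((1 - δ) + δ) := (Real.rpow_add hnpos _ _).symm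
          _ = (n:ℝ) := by norm_num
      exact_mod_cast hcast
    obtain ⟨c2, hc2def⟩ : ∃ c2 : ℝ, c2 = ξ1 * (2:ℝ) ^ (α + 1) * K ^ (1 + α) := ⟨_, rfl⟩
    have hc2pos : 0 < c2 := by
      have h1 : (0:ℝ) < (2:ℝ) ^ (α + 1) := Real.rpow_pos_of_pos (by norm_num) _
      have h2 : (0:ℝ) < K ^ (1 + α) := Real.rpow_pos_of_pos hKpos _
      have h3 : (0:ℝ) < ξ1 := by linarith
      rw [hc2def]; positivity
    obtain ⟨c, hcdef⟩ : ∃ c : ℝ, c = max ((N:ℝ) ^ α) (max 1 c2) := ⟨_, rfl⟩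
    have hc1 : 1 ≤ c := by rw [hcdef]; exact le_trans (le_max_left 1 c2) (le_max_right _ _)
    have hcc2 : c2 ≤ c := by rw [hcdef]; exact le_trans (le_max_right 1 c2) (le_max_right _ _)
    have hcN : (N:ℝ) ^ α ≤ c := by rw [hcdef]; exact le_max_left _ _
    refine ⟨c, by linarith, ?_⟩
    intro x n hn
    haveI := hP x
    have hn1R : (1:ℝ) ≤ (n:ℝ) := by exact_mod_cast hn
    have hnposR : (0:ℝ) < (n:ℝ) := by linarith
    have hRpos : (0:ℝ) < (n:ℝ) ^ (-(α - ε)) := Real.rpow_pos_of_pos hnposR _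
    rcases lt_or_ge n N with hcase | hcase
    · -- small n : trivial bound
      have h1 : ((n:ℝ)) ^ (α - ε) ≤ c := by
        calc ((n:ℝ)) ^ (α - ε) ≤ ((N:ℝ)) ^ (α - ε) := by
              apply Real.rpow_le_rpow hnposR.le _ (by linarith)
              exact_mod_cast hcase.le
          _ ≤ ((N:ℝ)) ^ α := by
              apply Real.rpow_le_rpow_of_exponent_le _ (by linarith)
              exact_mod_cast hN1
          _ ≤ c := hcN
      have h2 : (1:ℝ) ≤ c * (η x + ξ x) * (n:ℝ) ^ (-(α - ε)) := by
        have he : ((n:ℝ)) ^ (α - ε) * ((n:ℝ)) ^ (-(α - ε)) = 1 := by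
          rw [← Real.rpow_add hnposR]; simp
        have hηξ : (1:ℝ) ≤ η x + ξ x := by linarith [hη x, hξ1 x]
        calc (1:ℝ) = ((n:ℝ)) ^ (α - ε) * ((n:ℝ)) ^ (-(α - ε)) := he.symm
          _ ≤ c * ((n:ℝ)) ^ (-(α - ε)) := mul_le_mul_of_nonneg_right h1 hRpos.le
          _ = c * 1 * ((n:ℝ)) ^ (-(α - ε)) := by ring
          _ ≤ c * (η x + ξ x) * ((n:ℝ)) ^ (-(α - ε)) := by
              apply mul_le_mul_of_nonneg_right _ hRpos.le
              apply mul_le_mul_of_nonneg_left hηξ (by linarith)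
      calc P x {ω | n < τC ω} ≤ 1 := prob_le_one
        _ = ENNReal.ofReal 1 := ENNReal.ofReal_one.symm
        _ ≤ ENNReal.ofReal (c * (η x + ξ x) * (n:ℝ) ^ (-(α - ε))) :=
            ENNReal.ofReal_le_ofReal h2
    · -- large n
      obtain ⟨m, hmdef⟩ : ∃ m : ℕ, m = ⌈(α / ω0) * Real.log n⌉₊ + 1 := ⟨_, rfl⟩
      have hm1 : 1 ≤ m := by rw [hmdef]; exact Nat.le_add_left 1 _
      have hmn : m ≤ n := by rw [hmdef]; exact hMlen n hcase
      have hm1R : (1:ℝ) ≤ (m:ℝ) := by exact_mod_cast hm1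
      have hmposR : (0:ℝ) < (m:ℝ) := by linarith
      obtain ⟨k, hkdef⟩ : ∃ k : ℕ, k = n / m := ⟨_, rfl⟩
      have hk1 : 1 ≤ k := by rw [hkdef]; exact (Nat.one_le_div_iff hm1).2 hmn
      have hk1R : (1:ℝ) ≤ (k:ℝ) := by exact_mod_cast hk1
      have hkposR : (0:ℝ) < (k:ℝ) := by linarith
      -- term 1
      have hterm1 : η x * Real.exp (-ω0 * m) ≤ η x * (n:ℝ) ^ (-(α - ε)) := by
        apply mul_le_mul_of_nonneg_left _ (hη x).le
        have hle : α * Real.log n ≤ ω0 * m := by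
          have : (α / ω0) * Real.log n ≤ (m:ℝ) := by
            rw [hmdef]; exact_mod_cast hMge n
          calc α * Real.log n = ω0 * ((α / ω0) * Real.log n) := by field_simp
            _ ≤ ω0 * m := mul_le_mul_of_nonneg_left this hω0.le
        calc Real.exp (-ω0 * m) ≤ Real.exp (Real.log n * (-α)) := by
              apply Real.exp_le_exp.2; nlinarith
          _ = (n:ℝ) ^ (-α) := (Real.rpow_def_of_pos hnposR _).symm
          _ ≤ (n:ℝ) ^ (-(α - ε)) :=
              Real.rpow_le_rpow_of_exponent_le hn1R (by linarith)
      -- term 2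
      have hterm2 : (ξ x + m * ξ1) * ((k:ℝ)) ^ (-α) ≤ c2 * ξ x * (n:ℝ) ^ (-(α - ε)) := by
        have h1 : n < m * (k + 1) := by
          have e1 : m * k + n % m = n := by rw [hkdef]; exact Nat.div_add_mod n m
          have e2 : n % m < m := Nat.mod_lt n (by omega)
          calc n = m * k + n % m := e1.symm
            _ < m * k + m := Nat.add_lt_add_left e2 _
            _ = m * (k + 1) := by ring
        have h2 : m * (k + 1) ≤ 2 * m * k := by
          have hmk : m ≤ m * k := Nat.le_mul_of_pos_right m (by omega)
          calc m * (k+1) = m * k + m := by ring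
            _ ≤ m * k + m * k := by omega
            _ = 2 * m * k := by ring
        have h3 : n < 2 * m * k := lt_of_lt_of_le h1 h2
        have hnlt : (n:ℝ) < 2 * (m:ℝ) * (k:ℝ) := by exact_mod_cast h3
        have h6 : (n:ℝ) ^ α ≤ ((2*(m:ℝ)) * (k:ℝ)) ^ α :=
          Real.rpow_le_rpow hnposR.le (by linarith) hα.le
        have h7 : ((2*(m:ℝ)) * (k:ℝ)) ^ α = (2*(m:ℝ)) ^ α * ((k:ℝ)) ^ α :=
          Real.mul_rpow (by positivity) hkposR.le
        have h8 : (n:ℝ) ^ α ≤ (2*(m:ℝ)) ^ α * ((k:ℝ)) ^ α := h7 ▸ h6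
        have hkα : ((k:ℝ)) ^ (-α) ≤ (2 * (m:ℝ)) ^ α * (n:ℝ) ^ (-α) := by
          have hkp : (0:ℝ) < ((k:ℝ)) ^ α := Real.rpow_pos_of_pos hkposR _
          have hnp : (0:ℝ) < ((n:ℝ)) ^ α := Real.rpow_pos_of_pos hnposR _
          rw [Real.rpow_neg hkposR.le, Real.rpow_neg hnposR.le, ← div_eq_mul_inv,
            le_div_iff₀ hnp, inv_mul_le_iff₀ hkp, mul_comm]
          exact h8
        have hb1 : (1:ℝ) ≤ (m:ℝ) * ξ1 := by nlinarith [hm1R, hξ1']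
        have hfac : ξ x + (m:ℝ) * ξ1 ≤ ξ x * (2 * (m:ℝ) * ξ1) := by
          nlinarith [mul_nonneg (sub_nonneg.2 (hξ1 x)) (sub_nonneg.2 hb1), hξ1 x, hb1]
        have hstep1 : (ξ x + m * ξ1) * ((k:ℝ)) ^ (-α) ≤
            (ξ x * (2 * (m:ℝ) * ξ1)) * ((2 * (m:ℝ)) ^ α * (n:ℝ) ^ (-α)) := by
          apply mul_le_mul hfac hkα (Real.rpow_nonneg hkposR.le _)
          exact mul_nonneg (by linarith [hξ1 x]) (by nlinarith [hm1R, hξ1'])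
        have hmm : (m:ℝ) * ((m:ℝ)) ^ α ≤ K ^ (1 + α) * (n:ℝ) ^ ε := by
          have hmK : (m:ℝ) ≤ K * (n:ℝ) ^ δ := by
            rw [hmdef]; exact hMle n hn
          have hKn : (0:ℝ) ≤ K * (n:ℝ) ^ δ := by positivity
          have ha1 : ((m:ℝ)) ^ α ≤ (K * (n:ℝ) ^ δ) ^ α :=
            Real.rpow_le_rpow hmposR.le hmK hα.le
          have ha2 : (m:ℝ) * ((m:ℝ)) ^ α ≤ (K * (n:ℝ) ^ δ) * (K * (n:ℝ) ^ δ) ^ α :=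
            mul_le_mul hmK ha1 (Real.rpow_nonneg hmposR.le _) hKn
          have e1 : (K * (n:ℝ) ^ δ) ^ α = K ^ α * ((n:ℝ) ^ δ) ^ α :=
            Real.mul_rpow hKpos.le (Real.rpow_nonneg hnposR.le _)
          have e2 : ((n:ℝ) ^ δ) ^ α = (n:ℝ) ^ (δ * α) := (Real.rpow_mul hnposR.le _ _).symm
          have e3 : K * K ^ α = K ^ (1 + α) := by
            rw [Real.rpow_add hKpos, Real.rpow_one]
          have e4 : (n:ℝ) ^ δ * (n:ℝ) ^ (δ * α) = (n:ℝ) ^ ε := by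
            rw [← Real.rpow_add hnposR]
            have : δ + δ * α = ε := by rw [← hδε]; ring
            rw [this]
          have e5 : (K * (n:ℝ) ^ δ) * (K * (n:ℝ) ^ δ) ^ α = K ^ (1 + α) * (n:ℝ) ^ ε := by
            calc (K * (n:ℝ) ^ δ) * (K * (n:ℝ) ^ δ) ^ α
                = (K * K ^ α) * ((n:ℝ) ^ δ * (n:ℝ) ^ (δ * α)) := by rw [e1, e2]; ring
              _ = K ^ (1 + α) * (n:ℝ) ^ ε := by rw [e3, e4]
          linarith [ha2, e5.le, e5.ge]
        have hstep2 : (ξ x * (2 * (m:ℝ) * ξ1)) * ((2 * (m:ℝ)) ^ α * (n:ℝ) ^ (-α)) =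
            (ξ1 * (2:ℝ) ^ (α + 1)) * ξ x * (((m:ℝ) * ((m:ℝ)) ^ α) * (n:ℝ) ^ (-α)) := by
          rw [Real.mul_rpow (by norm_num : (0:ℝ) ≤ 2) hmposR.le,
            Real.rpow_add_one (by norm_num : (2:ℝ) ≠ 0) α]
          ring
        have hpos1 : (0:ℝ) ≤ ξ1 * (2:ℝ) ^ (α + 1) := by
          have : (0:ℝ) < (2:ℝ) ^ (α + 1) := Real.rpow_pos_of_pos (by norm_num) _
          nlinarith
        have hpos2 : (0:ℝ) ≤ (ξ1 * (2:ℝ) ^ (α + 1)) * ξ x := by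
          nlinarith [hξ1 x]
        have hnegα : (0:ℝ) ≤ (n:ℝ) ^ (-α) := Real.rpow_nonneg hnposR.le _
        have hstep3 : (ξ1 * (2:ℝ) ^ (α + 1)) * ξ x * (((m:ℝ) * ((m:ℝ)) ^ α) * (n:ℝ) ^ (-α)) ≤
            (ξ1 * (2:ℝ) ^ (α + 1)) * ξ x * ((K ^ (1 + α) * (n:ℝ) ^ ε) * (n:ℝ) ^ (-α)) := by
          apply mul_le_mul_of_nonneg_left _ hpos2
          exact mul_le_mul_of_nonneg_right hmm hnegα
        have hstep4 : (ξ1 * (2:ℝ) ^ (α + 1)) * ξ x * ((K ^ (1 + α) * (n:ℝ) ^ ε) * (n:ℝ) ^ (-α)) =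
            c2 * ξ x * (n:ℝ) ^ (-(α - ε)) := by
          have e6 : (n:ℝ) ^ ε * (n:ℝ) ^ (-α) = (n:ℝ) ^ (-(α - ε)) := by
            rw [← Real.rpow_add hnposR]
            have : ε + -α = -(α - ε) := by ring
            rw [this]
          rw [hc2def, ← e6]
          ring
        calc (ξ x + m * ξ1) * ((k:ℝ)) ^ (-α)
            ≤ (ξ x * (2 * (m:ℝ) * ξ1)) * ((2 * (m:ℝ)) ^ α * (n:ℝ) ^ (-α)) := hstep1
          _ = (ξ1 * (2:ℝ) ^ (α + 1)) * ξ x * (((m:ℝ) * ((m:ℝ)) ^ α) * (n:ℝ) ^ (-α)) := hstep2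
          _ ≤ (ξ1 * (2:ℝ) ^ (α + 1)) * ξ x * ((K ^ (1 + α) * (n:ℝ) ^ ε) * (n:ℝ) ^ (-α)) := hstep3
          _ = c2 * ξ x * (n:ℝ) ^ (-(α - ε)) := hstep4
      -- combine
      have hkey := key x m n hm1 hmn
      rw [← hkdef] at hkey
      have hnn1 : 0 ≤ η x * Real.exp (-ω0 * m) := mul_nonneg (hη x).le (Real.exp_pos _).le
      have hnn1' : 0 ≤ η x * (n:ℝ) ^ (-(α - ε)) := mul_nonneg (hη x).le hRpos.le
      have hnn2 : 0 ≤ c2 * ξ x * (n:ℝ) ^ (-(α - ε)) :=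
        mul_nonneg (mul_nonneg hc2pos.le (by linarith [hξ1 x])) hRpos.le
      have hfinal : η x * (n:ℝ) ^ (-(α - ε)) + c2 * ξ x * (n:ℝ) ^ (-(α - ε)) ≤
          c * (η x + ξ x) * (n:ℝ) ^ (-(α - ε)) := by
        have hbase : η x + c2 * ξ x ≤ c * (η x + ξ x) := by
          nlinarith [mul_nonneg (sub_nonneg.2 hc1) (hη x).le,
            mul_nonneg (sub_nonneg.2 hcc2) (le_trans zero_le_one (hξ1 x))]
        nlinarith [mul_le_mul_of_nonneg_right hbase hRpos.le]
      calc P x {ω | n < τC ω}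
          ≤ ENNReal.ofReal (η x * Real.exp (-ω0 * m)) +
              ENNReal.ofReal ((ξ x + m * ξ1) * ((k:ℝ)) ^ (-α)) := hkey
        _ ≤ ENNReal.ofReal (η x * (n:ℝ) ^ (-(α - ε))) +
              ENNReal.ofReal (c2 * ξ x * (n:ℝ) ^ (-(α - ε))) :=
            add_le_add (ENNReal.ofReal_le_ofReal hterm1) (ENNReal.ofReal_le_ofReal hterm2)
        _ = ENNReal.ofReal (η x * (n:ℝ) ^ (-(α - ε)) + c2 * ξ x * (n:ℝ) ^ (-(α - ε))) :=
            (ENNReal.ofReal_add hnn1' hnn2).symm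
        _ ≤ ENNReal.ofReal (c * (η x + ξ x) * (n:ℝ) ^ (-(α - ε))) :=
            ENNReal.ofReal_le_ofReal hfinal
  intro ε hε
  obtain ⟨c, hc, hbound⟩ := main (min ε (α/2)) (lt_min hε (by linarith)) (by
    calc min ε (α/2) ≤ α/2 := min_le_right _ _
      _ < α := by linarith)
  refine ⟨c, hc, fun x n hn => ?_⟩
  refine le_trans (hbound x n hn) (ENNReal.ofReal_le_ofReal ?_)
  have hn1 : (1:ℝ) ≤ (n:ℝ) := by exact_mod_cast hn
  have hrle : (n:ℝ) ^ (-(α - min ε (α/2))) ≤ (n:ℝ) ^ (-(α - ε)) :=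
    Real.rpow_le_rpow_of_exponent_le hn1 (by
      have : min ε (α/2) ≤ ε := min_le_left _ _
      linarith)
  have hcc : 0 ≤ c * (η x + ξ x) := by nlinarith [hη x, hξ1 x]
  exact mul_le_mul_of_nonneg_left hrle hcc
end

section
/- Let 0 < a < 1 and x, y > 0 with y ≤ C'x for a constant C' ≥ 1, and z > C'(x+y). Then (x+y)^{a−1} − ∫_0^1 (x + p(y+z))^{a−1} dp ≥ (1/2)(x+y)^{a−1} ≥ (1/(2(1+C')))·x^{a−1}, provided C' ≥ (a/2)^{1/(a−1)}. -/
lemma aux_rpow_add_le (a u v : ℝ) (hu : 0 ≤ u) (hv : 0 ≤ v) (h0 : 0 ≤ a) (h1 : a ≤ 1) :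
    (u + v) ^ a ≤ u ^ a + v ^ a := by
  have h := NNReal.rpow_add_le_add_rpow u.toNNReal v.toNNReal h0 h1
  rw [← Real.toNNReal_add hu hv] at h
  have h2 := NNReal.coe_le_coe.2 h
  push_cast at h2
  rwa [Real.coe_toNNReal _ (by positivity), Real.coe_toNNReal _ hu,
    Real.coe_toNNReal _ hv] at h2

theorem stmt16 (a C' x y z : ℝ) (ha : 0 < a) (ha1 : a < 1)
    (hC1 : 1 ≤ C') (hC2 : (a / 2) ^ (1 / (a - 1)) ≤ C')
    (hx : 0 < x) (hy : 0 < y) (hz : 0 < z) (hyx : y ≤ C' * x)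
    (hzC : C' * (x + y) < z) :
    (1 / (2 * (1 + C'))) * x ^ (a - 1) ≤ (1 / 2) * (x + y) ^ (a - 1) ∧
      (1 / 2) * (x + y) ^ (a - 1)
        ≤ (x + y) ^ (a - 1) - ∫ p in (0:ℝ)..1, (x + p * (y + z)) ^ (a - 1) := by
  have hxy : 0 < x + y := by linarith
  have hs : 0 < y + z := by linarith
  have hC0 : 0 < C' := lt_of_lt_of_le one_pos hC1
  have ham : a - 1 ≤ 0 := by linarith
  constructor
  · -- first inequality
    have h1 : x + y ≤ (1 + C') * x := by nlinarith
    have h2 : ((1 + C') * x) ^ (a - 1) ≤ (x + y) ^ (a - 1) :=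
      Real.rpow_le_rpow_of_nonpos hxy h1 ham
    have h3 : ((1 + C') * x) ^ (a - 1) = (1 + C') ^ (a - 1) * x ^ (a - 1) :=
      Real.mul_rpow (by linarith) hx.le
    have h4 : (1 + C') ^ (-1 : ℝ) ≤ (1 + C') ^ (a - 1) :=
      Real.rpow_le_rpow_of_exponent_le (by linarith) (by linarith)
    have h5 : (1 + C') ^ (-1 : ℝ) = 1 / (1 + C') := by
      rw [Real.rpow_neg_one]; ring
    have hxp : 0 < x ^ (a - 1) := Real.rpow_pos_of_pos hx _
    calc (1 / (2 * (1 + C'))) * x ^ (a - 1)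
        = (1 / 2) * ((1 + C') ^ (-1 : ℝ) * x ^ (a - 1)) := by rw [h5]; field_simp
      _ ≤ (1 / 2) * ((1 + C') ^ (a - 1) * x ^ (a - 1)) := by
          have := mul_le_mul_of_nonneg_right h4 hxp.le
          linarith
      _ = (1 / 2) * ((1 + C') * x) ^ (a - 1) := by rw [h3]
      _ ≤ (1 / 2) * (x + y) ^ (a - 1) := by linarith
  · -- second inequality
    have hsne : (y + z) ≠ 0 := hs.ne'
    -- compute the integral
    have hI : (∫ p in (0:ℝ)..1, (x + p * (y + z)) ^ (a - 1))
        = (y + z)⁻¹ * (((x + (y + z)) ^ a - x ^ a) / a) := by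
      have h0 : (∫ p in (0:ℝ)..1, (x + p * (y + z)) ^ (a - 1))
          = ∫ p in (0:ℝ)..1, ((y + z) * p + x) ^ (a - 1) := by
        congr 1; ext p; ring_nf
      rw [h0, intervalIntegral.integral_comp_mul_add (fun u => u ^ (a - 1)) hsne x]
      rw [mul_zero, mul_one, zero_add, smul_eq_mul]
      rw [integral_rpow (Or.inl (by linarith))]
      have : a - 1 + 1 = a := by ring
      rw [this, add_comm (y + z) x]
    rw [hI]
    -- bound the integral
    have hsub : (x + (y + z)) ^ a - x ^ a ≤ (y + z) ^ a := by
      have := aux_rpow_add_le a x (y + z) hx.le hs.le ha.le ha1.le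
      linarith
    have hkey : (y + z) ^ (a - 1) ≤ (a / 2) * (x + y) ^ (a - 1) := by
      have hCp : (0:ℝ) < (a / 2) ^ (1 / (a - 1)) :=
        Real.rpow_pos_of_pos (by linarith) _
      have hC' : C' ^ (a - 1) ≤ a / 2 := by
        have h := Real.rpow_le_rpow_of_nonpos hCp hC2 ham
        rwa [← Real.rpow_mul (by linarith : (0:ℝ) ≤ a / 2),
          one_div, inv_mul_cancel₀ (by intro h'; apply ha1.ne; linarith : a - 1 ≠ 0),
          Real.rpow_one] at h
      have h1 : C' * (x + y) ≤ y + z := by linarith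
      have h2 : (y + z) ^ (a - 1) ≤ (C' * (x + y)) ^ (a - 1) :=
        Real.rpow_le_rpow_of_nonpos (by positivity) h1 ham
      have h3 : (C' * (x + y)) ^ (a - 1) = C' ^ (a - 1) * (x + y) ^ (a - 1) :=
        Real.mul_rpow hC0.le hxy.le
      have hxyp : 0 < (x + y) ^ (a - 1) := Real.rpow_pos_of_pos hxy _
      calc (y + z) ^ (a - 1) ≤ C' ^ (a - 1) * (x + y) ^ (a - 1) := by rw [← h3]; exact h2
        _ ≤ (a / 2) * (x + y) ^ (a - 1) := mul_le_mul_of_nonneg_right hC' hxyp.le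
    have hstep : (y + z)⁻¹ * (((x + (y + z)) ^ a - x ^ a) / a)
        ≤ (y + z) ^ (a - 1) / a := by
      have h1 : (y + z)⁻¹ * (((x + (y + z)) ^ a - x ^ a) / a)
          ≤ (y + z)⁻¹ * ((y + z) ^ a / a) := by
        apply mul_le_mul_of_nonneg_left _ (inv_nonneg.2 hs.le)
        gcongr
      have h2 : (y + z)⁻¹ * ((y + z) ^ a / a) = (y + z) ^ (a - 1) / a := by
        rw [Real.rpow_sub hs, Real.rpow_one]
        field_simp
      linarith
    have hfin : (y + z) ^ (a - 1) / a ≤ (1 / 2) * (x + y) ^ (a - 1) := by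
      rw [div_le_iff₀ ha] at *
      nlinarith [hkey]
    linarith
end
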